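/- Asymptotic-variance formula for the AIPW class (population identity): Let (Ω, 𝓐, P) be a probability space, X : Ω → 𝒳 a random variable into a measurable space, Y : Ω → ℝ square-integrable, and let μ₀ be a version of the conditional expectation E[Y | σ(X)]. Let ρ₀ ∈ (0,1), let f : 𝒳 → ℝ be measurable with f(X) square-integrable, and set f̃ := f(X) − E[f(X)] + E[Y], ψ₀ := E[Y]. Define D^L := f̃ − ψ₀ + ρ₀⁻¹·(Y − f̃). Then ρ₀·Var[D^L] + (1−ρ₀)·Var[f̃] = Var[μ₀] + ρ₀⁻¹·E[(Y − μ₀)²] + ((1−ρ₀)/ρ₀)·E[(f̃ − μ₀)²]. -/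

import Mathlib

open MeasureTheory ProbabilityTheory

private lemma integrable_mul_of_memL2 {Ω : Type*} [MeasurableSpace Ω] {P : Measure Ω}
    {g h : Ω → ℝ} (hg : MemLp g 2 P) (hh : MemLp h 2 P) :
    Integrable (fun ω => g ω * h ω) P := by
  have hb : Integrable (fun ω => g ω ^ 2 + h ω ^ 2) P := hg.integrable_sq.add hh.integrable_sq
  refine Integrable.mono' hb (hg.aestronglyMeasurable.mul hh.aestronglyMeasurable) ?_
  filter_upwards with ω
  have h1 : (|g ω| - |h ω|) ^ 2 ≥ 0 := sq_nonneg _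
  rw [Real.norm_eq_abs, abs_mul]
  nlinarith [sq_abs (g ω), sq_abs (h ω)]

private lemma memL2_condexp {Ω : Type*} {m : MeasurableSpace Ω} [m0 : MeasurableSpace Ω]
    (hm : m ≤ m0) (P : Measure Ω) [IsProbabilityMeasure P]
    {g : Ω → ℝ} (hg : MemLp g 2 P) : MemLp (P[g|m]) 2 P := by
  have hgi : Integrable g P := hg.integrable one_le_two
  set G : Lp ℝ 2 P := ↑(condExpL2 ℝ ℝ hm (hg.toLp g)) with hG
  have hae : (G : Ω → ℝ) =ᵐ[P] P[g|m] := by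
    refine ae_eq_condExp_of_forall_setIntegral_eq hm hgi ?_ ?_ ?_
    · intro s _ _
      exact ((Lp.memLp G).integrable one_le_two).integrableOn
    · intro s hs hμs
      rw [hG]
      rw [integral_condExpL2_eq hm (hg.toLp g) hs hμs.ne]
      exact setIntegral_congr_ae (hm s hs)
        ((hg.coeFn_toLp).mono fun x hx _ => hx)
    · exact lpMeas.aestronglyMeasurable (condExpL2 ℝ ℝ hm (hg.toLp g))
  exact (Lp.memLp G).ae_eq hae

private lemma integral_quad {Ω : Type*} [MeasurableSpace Ω] {P : Measure Ω}
    [IsProbabilityMeasure P] {g h : Ω → ℝ}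
    (hg2 : Integrable (fun ω => g ω ^ 2) P) (hh2 : Integrable (fun ω => h ω ^ 2) P)
    (hgh : Integrable (fun ω => g ω * h ω) P)
    (hg1 : Integrable g P) (hh1 : Integrable h P) (c1 c2 c3 c4 c5 c6 : ℝ) :
    ∫ ω, (c1 * g ω ^ 2 + c2 * h ω ^ 2 + c3 * (g ω * h ω) + c4 * g ω + c5 * h ω + c6) ∂P
      = c1 * (∫ ω, g ω ^ 2 ∂P) + c2 * (∫ ω, h ω ^ 2 ∂P) + c3 * (∫ ω, g ω * h ω ∂P)
        + c4 * (∫ ω, g ω ∂P) + c5 * (∫ ω, h ω ∂P) + c6 := by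
  have i1 : Integrable (fun ω => c1 * g ω ^ 2) P := hg2.const_mul c1
  have i2 : Integrable (fun ω => c2 * h ω ^ 2) P := hh2.const_mul c2
  have i3 : Integrable (fun ω => c3 * (g ω * h ω)) P := hgh.const_mul c3
  have i4 : Integrable (fun ω => c4 * g ω) P := hg1.const_mul c4
  have i5 : Integrable (fun ω => c5 * h ω) P := hh1.const_mul c5
  have i12 : Integrable (fun ω => c1 * g ω ^ 2 + c2 * h ω ^ 2) P := i1.add i2
  have i123 : Integrable (fun ω => c1 * g ω ^ 2 + c2 * h ω ^ 2 + c3 * (g ω * h ω)) P :=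
    i12.add i3
  have i1234 : Integrable
      (fun ω => c1 * g ω ^ 2 + c2 * h ω ^ 2 + c3 * (g ω * h ω) + c4 * g ω) P := i123.add i4
  have i12345 : Integrable
      (fun ω => c1 * g ω ^ 2 + c2 * h ω ^ 2 + c3 * (g ω * h ω) + c4 * g ω + c5 * h ω) P :=
    i1234.add i5
  rw [integral_add i12345 (integrable_const c6), integral_add i1234 i5, integral_add i123 i4,
    integral_add i12 i3, integral_add i1 i2, integral_const_mul, integral_const_mul,
    integral_const_mul, integral_const_mul, integral_const_mul, integral_const]
  simp

/-- Asymptotic-variance formula for the AIPW class (population identity):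
with `f̃ = f(X) − E[f(X)] + E[Y]`, `ψ₀ = E[Y]`, and
`D^L = f̃ − ψ₀ + ρ₀⁻¹·(Y − f̃)`, one has
`ρ₀·Var[D^L] + (1−ρ₀)·Var[f̃]
  = Var[μ₀] + ρ₀⁻¹·E[(Y − μ₀)²] + ((1−ρ₀)/ρ₀)·E[(f̃ − μ₀)²]`,
where `μ₀` is a version of `E[Y | σ(X)]`. -/
theorem aipw_asymptotic_variance_formula
    {Ω 𝒳 : Type*} [MeasurableSpace Ω] [MeasurableSpace 𝒳]
    (P : Measure Ω) [IsProbabilityMeasure P]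
    (X : Ω → 𝒳) (hX : Measurable X)
    (Y : Ω → ℝ) (hY : MemLp Y 2 P)
    (μ₀ : Ω → ℝ)
    (hμ₀ : μ₀ =ᵐ[P] P[Y | MeasurableSpace.comap X inferInstance])
    (ρ₀ : ℝ) (hρ : ρ₀ ∈ Set.Ioo (0 : ℝ) 1)
    (f : 𝒳 → ℝ) (hf : Measurable f)
    (hfL2 : MemLp (fun ω => f (X ω)) 2 P)
    (ft : Ω → ℝ)
    (hft : ft = fun ω => f (X ω) - (∫ ω', f (X ω') ∂P) + ∫ ω', Y ω' ∂P)
    (DL : Ω → ℝ)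
    (hDL : DL = fun ω => ft ω - (∫ ω', Y ω' ∂P) + ρ₀⁻¹ * (Y ω - ft ω)) :
    ρ₀ * variance DL P + (1 - ρ₀) * variance ft P
      = variance μ₀ P + ρ₀⁻¹ * (∫ ω, (Y ω - μ₀ ω) ^ 2 ∂P)
        + ((1 - ρ₀) / ρ₀) * (∫ ω, (ft ω - μ₀ ω) ^ 2 ∂P) := by
  obtain ⟨hρ0, hρ1⟩ := hρ
  have hρne : ρ₀ ≠ 0 := ne_of_gt hρ0
  have hm := hX.comap_le
  set ce : Ω → ℝ := P[Y | MeasurableSpace.comap X inferInstance] with hce_def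
  have hμce : μ₀ =ᵐ[P] ce := hμ₀
  set ψ : ℝ := ∫ ω', Y ω' ∂P with hψ
  -- basic integrability / L² facts
  have hY1 : Integrable Y P := hY.integrable one_le_two
  have hce2 : MemLp ce 2 P := memL2_condexp hm P hY
  have hμ₀2 : MemLp μ₀ 2 P := hce2.ae_eq hμce.symm
  have hft2 : MemLp ft 2 P := by
    rw [hft]
    exact (hfL2.sub (memLp_const _)).add (memLp_const _)
  have hft1 : Integrable ft P := hft2.integrable one_le_two
  have hce1 : Integrable ce P := hce2.integrable one_le_two
  have hftm : StronglyMeasurable[MeasurableSpace.comap X inferInstance] ft := by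
    rw [hft]
    have hXm : Measurable[MeasurableSpace.comap X inferInstance] X :=
      measurable_iff_comap_le.mpr le_rfl
    exact (((hf.comp hXm).stronglyMeasurable.sub stronglyMeasurable_const).add
      stronglyMeasurable_const)
  -- ∫ ft = ψ
  have hftint : ∫ ω, ft ω ∂P = ψ := by
    simp only [hft]
    have k1 : Integrable (fun ω => f (X ω) - (∫ ω', f (X ω') ∂P)) P :=
      (hfL2.integrable one_le_two).sub (integrable_const _)
    rw [integral_add k1 (integrable_const _),
      integral_sub (hfL2.integrable one_le_two) (integrable_const _)]
    simp [hψ]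
  -- ∫ ce = ψ
  have hceint : ∫ ω, ce ω ∂P = ψ := integral_condExp hm
  -- orthogonality
  have horth : ∀ g : Ω → ℝ, StronglyMeasurable[MeasurableSpace.comap X inferInstance] g →
      MemLp g 2 P → ∫ ω, g ω * Y ω ∂P = ∫ ω, g ω * ce ω ∂P := by
    intro g hgm hg2
    have hgY : Integrable (g * Y) P := integrable_mul_of_memL2 hg2 hY
    have h1 : P[g * Y | MeasurableSpace.comap X inferInstance] =ᵐ[P] g * ce :=
      condExp_mul_of_stronglyMeasurable_left hgm hgY hY1
    calc ∫ ω, g ω * Y ω ∂P = ∫ ω, (g * Y) ω ∂P := rfl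
      _ = ∫ ω, (P[g * Y | MeasurableSpace.comap X inferInstance]) ω ∂P :=
        (integral_condExp hm).symm
      _ = ∫ ω, (g * ce) ω ∂P := integral_congr_ae h1
      _ = ∫ ω, g ω * ce ω ∂P := rfl
  -- abbreviations for moments
  set a : ℝ := ∫ ω, Y ω ^ 2 ∂P with ha
  set b : ℝ := ∫ ω, ft ω ^ 2 ∂P with hb
  set c : ℝ := ∫ ω, ce ω ^ 2 ∂P with hc
  set p : ℝ := ∫ ω, ft ω * Y ω ∂P with hp_def
  have hq : ∫ ω, ce ω * Y ω ∂P = c := by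
    rw [horth ce stronglyMeasurable_condExp hce2, hc]
    exact integral_congr_ae (Filter.Eventually.of_forall fun ω => by ring)
  have hp : ∫ ω, ft ω * ce ω ∂P = p := (horth ft hftm hft2).symm
  -- integrable squares/products
  have iY2 : Integrable (fun ω => Y ω ^ 2) P := hY.integrable_sq
  have ift2 : Integrable (fun ω => ft ω ^ 2) P := hft2.integrable_sq
  have ice2 : Integrable (fun ω => ce ω ^ 2) P := hce2.integrable_sq
  have iftY : Integrable (fun ω => ft ω * Y ω) P := integrable_mul_of_memL2 hft2 hY
  have iceY : Integrable (fun ω => ce ω * Y ω) P := integrable_mul_of_memL2 hce2 hY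
  have iftce : Integrable (fun ω => ft ω * ce ω) P := integrable_mul_of_memL2 hft2 hce2
  -- variance of ft
  have hVft : variance ft P = b - ψ ^ 2 := by
    rw [variance_eq_sub hft2]
    simp only [Pi.pow_apply]
    rw [hftint, hb]
  -- variance of μ₀
  have hμint : ∫ ω, μ₀ ω ∂P = ψ := by
    rw [integral_congr_ae hμce, hceint]
  have hμsq : ∫ ω, μ₀ ω ^ 2 ∂P = c := by
    rw [hc]
    exact integral_congr_ae (hμce.mono fun ω h => by simp only [h])
  have hVμ : variance μ₀ P = c - ψ ^ 2 := by
    rw [variance_eq_sub hμ₀2]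
    simp only [Pi.pow_apply]
    rw [hμint, hμsq]
  -- RHS error terms
  have hR1 : ∫ ω, (Y ω - μ₀ ω) ^ 2 ∂P = a - c := by
    have e1 : ∫ ω, (Y ω - μ₀ ω) ^ 2 ∂P = ∫ ω, (Y ω - ce ω) ^ 2 ∂P :=
      integral_congr_ae (hμce.mono fun ω h => by simp only [h])
    have e2 : ∀ ω, (Y ω - ce ω) ^ 2
        = (1 : ℝ) * ce ω ^ 2 + 1 * Y ω ^ 2 + (-2) * (ce ω * Y ω)
          + 0 * ce ω + 0 * Y ω + 0 := by intro ω; ring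
    rw [e1, integral_congr_ae (Filter.Eventually.of_forall e2),
      integral_quad ice2 iY2 iceY hce1 hY1 1 1 (-2) 0 0 0, hq, ← ha, ← hc]
    ring
  have hR2 : ∫ ω, (ft ω - μ₀ ω) ^ 2 ∂P = b + c - 2 * p := by
    have e1 : ∫ ω, (ft ω - μ₀ ω) ^ 2 ∂P = ∫ ω, (ft ω - ce ω) ^ 2 ∂P :=
      integral_congr_ae (hμce.mono fun ω h => by simp only [h])
    have e2 : ∀ ω, (ft ω - ce ω) ^ 2
        = (1 : ℝ) * ft ω ^ 2 + 1 * ce ω ^ 2 + (-2) * (ft ω * ce ω)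
          + 0 * ft ω + 0 * ce ω + 0 := by intro ω; ring
    rw [e1, integral_congr_ae (Filter.Eventually.of_forall e2),
      integral_quad ift2 ice2 iftce hft1 hce1 1 1 (-2) 0 0 0, hp, ← hb, ← hc]
    ring
  -- variance of DL
  have hDL2 : MemLp DL 2 P := by
    rw [hDL]
    exact (hft2.sub (memLp_const _)).add ((hY.sub hft2).const_mul ρ₀⁻¹)
  have hDLint : ∫ ω, DL ω ∂P = 0 := by
    have e : ∀ ω, DL ω = (1 - ρ₀⁻¹) * ft ω + ρ₀⁻¹ * Y ω + (-ψ) := by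
      intro ω; simp only [hDL]; ring
    have j1 : Integrable (fun ω => (1 - ρ₀⁻¹) * ft ω) P := hft1.const_mul _
    have j2 : Integrable (fun ω => ρ₀⁻¹ * Y ω) P := hY1.const_mul _
    have j12 : Integrable (fun ω => (1 - ρ₀⁻¹) * ft ω + ρ₀⁻¹ * Y ω) P := j1.add j2
    rw [integral_congr_ae (Filter.Eventually.of_forall e),
      integral_add j12 (integrable_const _), integral_add j1 j2,
      integral_const_mul, integral_const_mul, integral_const, hftint, ← hψ, probReal_univ]
    simp only [ENNReal.toReal_one, smul_eq_mul, one_mul]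
    ring
  have hDLsq : ∫ ω, DL ω ^ 2 ∂P
      = (1 - ρ₀⁻¹) ^ 2 * b + ρ₀⁻¹ ^ 2 * a + (2 * ρ₀⁻¹ * (1 - ρ₀⁻¹)) * p
        + (-2 * (1 - ρ₀⁻¹) * ψ) * ψ + (-2 * ρ₀⁻¹ * ψ) * ψ + ψ ^ 2 := by
    have e : ∀ ω, DL ω ^ 2
        = (1 - ρ₀⁻¹) ^ 2 * ft ω ^ 2 + ρ₀⁻¹ ^ 2 * Y ω ^ 2
          + (2 * ρ₀⁻¹ * (1 - ρ₀⁻¹)) * (ft ω * Y ω)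
          + (-2 * (1 - ρ₀⁻¹) * ψ) * ft ω + (-2 * ρ₀⁻¹ * ψ) * Y ω + ψ ^ 2 := by
      intro ω; simp only [hDL]; ring
    rw [integral_congr_ae (Filter.Eventually.of_forall e),
      integral_quad ift2 iY2 iftY hft1 hY1 _ _ _ _ _ _,
      hftint, ← ha, ← hb, ← hp_def, ← hψ]
  have hVDL : variance DL P = (1 - ρ₀⁻¹) ^ 2 * b + ρ₀⁻¹ ^ 2 * a
      + (2 * ρ₀⁻¹ * (1 - ρ₀⁻¹)) * p - 2 * (1 - ρ₀⁻¹) * ψ ^ 2 - 2 * ρ₀⁻¹ * ψ ^ 2 + ψ ^ 2 := by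
    rw [variance_eq_sub hDL2]
    simp only [Pi.pow_apply]
    rw [hDLint, hDLsq]
    ring
  -- final algebra
  rw [hVDL, hVft, hVμ, hR1, hR2]
  field_simp
  ring
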